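/- Let π, π' ∈ K_n with π ≠ π'. Then Tr[P^+_{π'} ρ^+_π] = 1/2 and Tr[P^−_{π'} ρ^+_π] = 1/2; i.e., measuring M_{π'} on ρ^+_π yields a uniformly random outcome. -/

import Mathlib

noncomputable section

/-- The Hilbert space with orthonormal basis indexed by permutations of {1,…,n}. -/
abbrev HS (n : ℕ) := EuclideanSpace ℂ (Equiv.Perm (Fin n))

/-- The basis vector |σ⟩. -/
def ket {n : ℕ} (σ : Equiv.Perm (Fin n)) : HS n := EuclideanSpace.single σ 1

/-- |ψ^s_π(σ)⟩ = (|σ⟩ + s|σ∘π⟩)/√2, where s = ±1. -/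
def psi {n : ℕ} (π : Equiv.Perm (Fin n)) (s : ℂ) (σ : Equiv.Perm (Fin n)) : HS n :=
  ((Real.sqrt 2 : ℂ))⁻¹ • (ket σ + s • ket (σ * π))

/-- K_n: the fixed-point-free involutions. -/
def Kn (n : ℕ) : Set (Equiv.Perm (Fin n)) := {π | π * π = 1 ∧ ∀ i, π i ≠ i}

/-- The rank-one operator |x⟩⟨y|. -/
def outer {n : ℕ} (x y : HS n) : HS n →ₗ[ℂ] HS n where
  toFun z := (inner ℂ y z : ℂ) • x
  map_add' a b := by simp [inner_add_right, add_smul]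
  map_smul' c a := by simp [inner_smul_right, mul_smul]

open Finset in
/-- The even permutations, as a finset. -/
def evens (n : ℕ) : Finset (Equiv.Perm (Fin n)) :=
  univ.filter (fun σ => Equiv.Perm.sign σ = 1)

/-- ρ^s_π = (2/n!) Σ_{σ even} |ψ^s_π(σ)⟩⟨ψ^s_π(σ)|, s = ±1. -/
def rho {n : ℕ} (π : Equiv.Perm (Fin n)) (s : ℂ) : HS n →ₗ[ℂ] HS n :=
  ((2 : ℂ) / (Nat.factorial n)) • ∑ σ ∈ evens n, outer (psi π s σ) (psi π s σ)

/-- P^s_π = Σ_{σ even} |ψ^s_π(σ)⟩⟨ψ^s_π(σ)|, s = ±1. -/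
def Pproj {n : ℕ} (π : Equiv.Perm (Fin n)) (s : ℂ) : HS n →ₗ[ℂ] HS n :=
  ∑ σ ∈ evens n, outer (psi π s σ) (psi π s σ)

open scoped InnerProductSpace ComplexConjugate

lemma inner_ket {n : ℕ} (a b : Equiv.Perm (Fin n)) :
    (inner ℂ (ket a) (ket b) : ℂ) = if a = b then 1 else 0 := by
  simp [ket, EuclideanSpace.inner_single_left, EuclideanSpace.single_apply]

@[simp] lemma outer_apply {n : ℕ} (x y z : HS n) : outer x y z = (inner ℂ y z : ℂ) • x := rfl

lemma outer_comp {n : ℕ} (x y a b : HS n) :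
    outer x y ∘ₗ outer a b = (inner ℂ y a : ℂ) • outer x b := by
  ext z
  simp only [LinearMap.coe_comp, Function.comp_apply, outer_apply, inner_smul_right,
    LinearMap.smul_apply, smul_smul]
  rw [mul_comm]

lemma trace_outer {n : ℕ} (x y : HS n) :
    LinearMap.trace ℂ (HS n) (outer x y) = (inner ℂ y x : ℂ) := by
  classical
  rw [LinearMap.trace_eq_matrix_trace ℂ (PiLp.basisFun 2 ℂ (Equiv.Perm (Fin n)))]
  simp [Matrix.trace, Matrix.diag, LinearMap.toMatrix_apply, outer, PiLp.basisFun_apply,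
    PiLp.inner_apply, mul_comm]

lemma inner_psi {n : ℕ} (π π' : Equiv.Perm (Fin n)) (s : ℂ) (τ σ : Equiv.Perm (Fin n)) :
    (inner ℂ (psi π' s τ) (psi π 1 σ) : ℂ) =
      (2 : ℂ)⁻¹ * (((if τ = σ then 1 else 0) + (if τ = σ * π then 1 else 0)) +
        conj s * ((if τ * π' = σ then 1 else 0) + (if τ * π' = σ * π then 1 else 0))) := by
  have h2 : (starRingEnd ℂ) ((Real.sqrt 2 : ℂ))⁻¹ * ((Real.sqrt 2 : ℂ))⁻¹ = (2 : ℂ)⁻¹ := by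
    rw [map_inv₀, Complex.conj_ofReal, ← mul_inv]
    norm_cast
    rw [Real.mul_self_sqrt (by norm_num)]
    norm_num
  simp only [psi, inner_smul_left, inner_smul_right, inner_add_left, inner_add_right,
    one_smul, inner_ket]
  rw [← h2]
  ring

lemma sign_of_Kn {n m : ℕ} (hn : n = 2 * (2 * m + 1)) {π : Equiv.Perm (Fin n)}
    (hπ : π ∈ Kn n) : Equiv.Perm.sign π = -1 := by
  obtain ⟨hinv, hfix⟩ := hπ
  have hord : orderOf π ∣ 2 := orderOf_dvd_of_pow_eq_one (by rw [pow_two]; exact hinv)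
  have hct : ∀ d ∈ π.cycleType, d = 2 := by
    intro d hd
    have h1 : d ∣ 2 := (Equiv.Perm.dvd_of_mem_cycleType hd).trans hord
    have h2 : 2 ≤ d := Equiv.Perm.two_le_of_mem_cycleType hd
    exact le_antisymm (Nat.le_of_dvd (by norm_num) h1) h2
  have hsupp : π.support = Finset.univ := by
    rw [Finset.eq_univ_iff_forall]
    intro i
    exact Equiv.Perm.mem_support.2 (hfix i)
  have hsum : π.cycleType.sum = n := by
    rw [Equiv.Perm.sum_cycleType, hsupp, Finset.card_univ, Fintype.card_fin]
  have hrep : π.cycleType = Multiset.replicate (Multiset.card π.cycleType) 2 :=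
    Multiset.eq_replicate.2 ⟨rfl, fun d hd => hct d hd⟩
  have hcard : Multiset.card π.cycleType = 2 * m + 1 := by
    have := hsum
    rw [hrep, Multiset.sum_replicate, smul_eq_mul] at this
    omega
  rw [Equiv.Perm.sign_of_cycleType, hsum, hcard, hn]
  have : (2 * (2 * m + 1) + (2 * m + 1)) = 2 * (3 * m + 1) + 1 := by ring
  rw [this, pow_succ, pow_mul]
  norm_num

lemma card_evens {n : ℕ} (hpos : 2 ≤ n) : 2 * (evens n).card = n.factorial := by
  have : Nontrivial (Fin n) := Fin.nontrivial_iff_two_le.2 hpos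
  have h1 : (evens n).card = Fintype.card (alternatingGroup (Fin n)) := by
    rw [evens, ← Fintype.card_subtype]
    exact Fintype.card_congr (Equiv.subtypeEquivRight fun σ =>
      (Equiv.Perm.mem_alternatingGroup).symm)
  rw [h1, two_mul_card_alternatingGroup, Fintype.card_perm, Fintype.card_fin]

lemma key_sum {n : ℕ} {π π' σ : Equiv.Perm (Fin n)} (s : ℂ) (hs : s = 1 ∨ s = -1)
    (hσ : Equiv.Perm.sign σ = 1) (hsπ : Equiv.Perm.sign π = -1)
    (hsπ' : Equiv.Perm.sign π' = -1) (hinv' : π' * π' = 1) (hne : π ≠ π') :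
    ∑ τ ∈ evens n, (inner ℂ (psi π' s τ) (psi π 1 σ) : ℂ) *
      (inner ℂ (psi π 1 σ) (psi π' s τ) : ℂ) = 1 / 2 := by
  have hπ1 : π ≠ 1 := by intro h; rw [h, map_one] at hsπ; exact absurd hsπ (by decide)
  have hπ'1 : π' ≠ 1 := by intro h; rw [h, map_one] at hsπ'; exact absurd hsπ' (by decide)
  have hπ'inv : π'⁻¹ = π' := inv_eq_of_mul_eq_one_left hinv'
  have hππ' : π * π' ≠ 1 := by
    intro h
    exact hne (by rw [← hπ'inv]; exact eq_inv_of_mul_eq_one_left h)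
  set t2 := σ * π * π' with ht2
  have ht : t2 * π' = σ * π := by rw [ht2, mul_assoc (σ * π) π' π', hinv', mul_one]
  -- values of the inner products
  have h₁ : ¬ σ = σ * π := fun h => hπ1 (left_eq_mul.mp h)
  have h₂ : ¬ σ * π' = σ := fun h => hπ'1 (mul_eq_left.mp h)
  have h₃ : ¬ σ * π' = σ * π := fun h => hne.symm (mul_left_cancel h)
  have hv1 : (inner ℂ (psi π' s σ) (psi π 1 σ) : ℂ) = 2⁻¹ := by
    rw [inner_psi, if_pos rfl, if_neg h₁, if_neg h₂, if_neg h₃]; ring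
  have d1 : ¬ t2 = σ := by
    intro h; rw [ht2, mul_assoc] at h; exact hππ' (mul_eq_left.mp h)
  have d2 : ¬ t2 = σ * π := fun h => hπ'1 (mul_eq_left.mp h)
  have d3 : ¬ t2 * π' = σ := by rw [ht]; exact fun h => hπ1 (mul_eq_left.mp h)
  have hv2 : (inner ℂ (psi π' s t2) (psi π 1 σ) : ℂ) = 2⁻¹ * conj s := by
    rw [inner_psi, if_neg d1, if_neg d2, if_neg d3, if_pos ht]; ring
  -- membership and distinctness
  have hmem1 : σ ∈ evens n := by simp [evens, hσ]
  have hmem2 : t2 ∈ evens n := by simp [evens, ht2, map_mul, hσ, hsπ, hsπ']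
  have hne12 : σ ≠ t2 := fun h => d1 h.symm
  have hsub : ({σ, t2} : Finset (Equiv.Perm (Fin n))) ⊆ evens n := by
    intro x hx
    rcases Finset.mem_insert.mp hx with rfl | hx
    · exact hmem1
    · rw [Finset.mem_singleton] at hx; subst hx; exact hmem2
  have hzero : ∀ τ ∈ evens n, τ ∉ ({σ, t2} : Finset (Equiv.Perm (Fin n))) →
      (inner ℂ (psi π' s τ) (psi π 1 σ) : ℂ) * (inner ℂ (psi π 1 σ) (psi π' s τ) : ℂ) = 0 := by
    intro τ hτ hτ'
    have hτs : Equiv.Perm.sign τ = 1 := by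
      simpa [evens] using hτ
    rw [Finset.mem_insert, Finset.mem_singleton] at hτ'
    push_neg at hτ'
    have e1 : ¬ τ = σ := hτ'.1
    have e2 : ¬ τ = σ * π := by
      intro h; rw [h, map_mul, hσ, hsπ] at hτs; exact absurd hτs (by decide)
    have e3 : ¬ τ * π' = σ := by
      intro h
      have : τ = σ * π' := by rw [← h, mul_assoc, hinv', mul_one]
      rw [this, map_mul, hσ, hsπ'] at hτs; exact absurd hτs (by decide)
    have e4 : ¬ τ * π' = σ * π := by
      intro h
      apply hτ'.2
      rw [ht2, ← h, mul_assoc, hinv', mul_one]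
    have : (inner ℂ (psi π' s τ) (psi π 1 σ) : ℂ) = 0 := by
      rw [inner_psi, if_neg e1, if_neg e2, if_neg e3, if_neg e4]; ring
    rw [this, zero_mul]
  rw [← Finset.sum_subset hsub hzero, Finset.sum_pair hne12]
  have c1 : (inner ℂ (psi π 1 σ) (psi π' s σ) : ℂ) = conj (2⁻¹ : ℂ) := by
    rw [← inner_conj_symm, hv1]
  have c2 : (inner ℂ (psi π 1 σ) (psi π' s t2) : ℂ) = conj ((2⁻¹ : ℂ) * conj s) := by
    rw [← inner_conj_symm, hv2]
  rw [hv1, hv2, c1, c2]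
  rcases hs with rfl | rfl <;> simp [map_ofNat] <;> norm_num

set_option maxHeartbeats 2000000 in
lemma trace_main {n m : ℕ} (hn : n = 2 * (2 * m + 1)) {π π' : Equiv.Perm (Fin n)}
    (hπ : π ∈ Kn n) (hπ' : π' ∈ Kn n) (hne : π ≠ π') (s : ℂ) (hs : s = 1 ∨ s = -1) :
    LinearMap.trace ℂ (HS n) (Pproj π' s ∘ₗ rho π 1) = 1 / 2 := by
  have hsπ : Equiv.Perm.sign π = -1 := sign_of_Kn hn hπ
  have hsπ' : Equiv.Perm.sign π' = -1 := sign_of_Kn hn hπ'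
  have hcomp : Pproj π' s ∘ₗ rho π 1 = ((2 : ℂ) / (Nat.factorial n)) •
      ∑ τ ∈ evens n, ∑ σ ∈ evens n,
        ((inner ℂ (psi π' s τ) (psi π 1 σ) : ℂ) • outer (psi π' s τ) (psi π 1 σ)) := by
    rw [Pproj, rho, ← Module.End.mul_eq_comp, mul_smul_comm, Finset.sum_mul_sum]
    congr 1
    refine Finset.sum_congr rfl fun τ _ => Finset.sum_congr rfl fun σ _ => ?_
    rw [Module.End.mul_eq_comp, outer_comp]
  rw [hcomp, map_smul, map_sum]
  simp_rw [map_sum, map_smul, trace_outer, smul_eq_mul]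
  rw [Finset.sum_comm]
  rw [Finset.sum_congr rfl (fun σ hσ => key_sum s hs
    (by simpa [evens] using hσ) hsπ hsπ' hπ'.1 hne)]
  rw [Finset.sum_const, nsmul_eq_mul]
  have hcard : 2 * (evens n).card = Nat.factorial n := card_evens (by omega)
  have hfac : ((Nat.factorial n : ℕ) : ℂ) = 2 * ((evens n).card : ℕ) := by
    exact_mod_cast congrArg (fun k : ℕ => (k : ℂ)) hcard.symm
  have hcpos : ((evens n).card : ℂ) ≠ 0 := by
    have : (evens n).card ≠ 0 := by
      intro h; rw [h] at hcard; simp at hcard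
      exact Nat.factorial_ne_zero n hcard.symm
    exact_mod_cast this
  rw [hfac]
  field_simp


/-- For distinct π, π' ∈ K_n, measuring M_{π'} on ρ^+_π gives a uniformly random
outcome: Tr[P^+_{π'} ρ^+_π] = 1/2 and Tr[P^-_{π'} ρ^+_π] = 1/2. -/
theorem measurement_wrong_trapdoor_uniform (n m : ℕ) (hn : n = 2 * (2 * m + 1))
    (π π' : Equiv.Perm (Fin n)) (hπ : π ∈ Kn n) (hπ' : π' ∈ Kn n) (hne : π ≠ π') :
    LinearMap.trace ℂ (HS n) (Pproj π' 1 ∘ₗ rho π 1) = 1 / 2 ∧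
    LinearMap.trace ℂ (HS n) (Pproj π' (-1) ∘ₗ rho π 1) = 1 / 2 := by
  exact ⟨trace_main hn hπ hπ' hne 1 (Or.inl rfl),
    trace_main hn hπ hπ' hne (-1) (Or.inr rfl)⟩
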